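/- Let f, g ∈ ℤ[x₁,…,x_n] with gcd(f,g) = 1 and max(deg f, deg g) ≤ D. Let x, c₁, …, c_n be new variables. Then gcd( f((x+c₁), (x+c₂)^{D+1}, …, (x+c_n)^{(D+1)^{n−1}}), g((x+c₁), (x+c₂)^{D+1}, …, (x+c_n)^{(D+1)^{n−1}}) ) = 1 in ℤ[x, c₁, …, c_n]. -/

import Mathlib

open MvPolynomial

section Stmt15Aux
open Polynomial nonZeroDivisors


theorem isRelPrime_equiv_iff {R S F : Type*} [CommRing R] [CommRing S] [EquivLike F R S]
    [RingEquivClass F R S] (σ : F) {a b : R} : IsRelPrime (σ a) (σ b) ↔ IsRelPrime a b := by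
  set e : R ≃+* S := RingEquivClass.toRingEquiv σ with he
  constructor
  · intro h d hda hdb
    have h1 : e d ∣ σ a := map_dvd e.toRingHom hda
    have h2 : e d ∣ σ b := map_dvd e.toRingHom hdb
    have h4 := (h h1 h2).map e.symm.toRingHom
    simpa using h4
  · intro h d hda hdb
    have h1 : e.symm d ∣ a := by
      simpa using map_dvd e.symm.toRingHom (show d ∣ e a from hda)
    have h2 : e.symm d ∣ b := by
      simpa using map_dvd e.symm.toRingHom (show d ∣ e b from hdb)
    simpa using (h h1 h2).map e.toRingHom

theorem isRelPrime_C_of_isRelPrime {A : Type*} [CommRing A] [IsDomain A] {f g : A}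
    (h : IsRelPrime f g) (h0 : f ≠ 0) :
    IsRelPrime (Polynomial.C f) (Polynomial.C g) := by
  intro d hdf hdg
  have hCf : (Polynomial.C f : A[X]) ≠ 0 := by simpa using h0
  obtain ⟨q, hq⟩ := id hdf
  have hd0 : d ≠ 0 := by rintro rfl; exact hCf (by simp [hq])
  have hq0 : q ≠ 0 := by rintro rfl; exact hCf (by simp [hq])
  have hdeg : d.natDegree = 0 := by
    have := Polynomial.natDegree_mul hd0 hq0
    rw [← hq, Polynomial.natDegree_C] at this
    omega
  have hdC : d = Polynomial.C (d.coeff 0) := Polynomial.eq_C_of_natDegree_eq_zero hdeg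
  rw [hdC] at hdf hdg ⊢
  have haf : d.coeff 0 ∣ f := by
    have := (Polynomial.C_dvd_iff_dvd_coeff (d.coeff 0) (Polynomial.C f)).mp hdf 0
    simpa using this
  have hag : d.coeff 0 ∣ g := by
    have := (Polynomial.C_dvd_iff_dvd_coeff (d.coeff 0) (Polynomial.C g)).mp hdg 0
    simpa using this
  exact (h haf hag).map Polynomial.C

theorem coeff_comp_X_pow {A : Type*} [CommSemiring A] (f : A[X]) {e : ℕ} (he : e ≠ 0) (k : ℕ) :
    (f.comp (Polynomial.X ^ e)).coeff (e * k) = f.coeff k := by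
  rw [Polynomial.comp, Polynomial.eval₂_eq_sum, Polynomial.sum_def, Polynomial.finset_sum_coeff]
  simp only [← pow_mul, Polynomial.coeff_C_mul, Polynomial.coeff_X_pow]
  rw [Finset.sum_eq_single k]
  · simp
  · intro b _ hbk
    have hne : ¬ (e * k = e * b) := fun hc => hbk (mul_left_cancel₀ he hc).symm
    simp [hne]
  · intro hk
    simp [Polynomial.notMem_support_iff.mp hk]

theorem comp_X_pow_eq_zero {A : Type*} [CommSemiring A] {f : A[X]} {e : ℕ} (he : e ≠ 0)
    (h : f.comp (Polynomial.X ^ e) = 0) : f = 0 := by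
  ext k
  have := coeff_comp_X_pow f he k
  rw [h] at this
  simpa using this.symm



variable {A : Type*} [CommRing A] [IsDomain A] [NormalizedGCDMonoid A]
variable {K : Type*} [Field K] [Algebra A K] [IsFractionRing A K]

theorem primPart_integerNormalization_dvd {d : K[X]} {p : A[X]}
    (hdvd : d ∣ p.map (algebraMap A K)) :
    (IsLocalization.integerNormalization A⁰ d).primPart ∣ p := by
  by_cases hp : p = 0
  · simp [hp]
  obtain ⟨⟨c, hc0⟩, hc⟩ := IsLocalization.integerNormalization_map_to_map A⁰ d
  set d₀ := IsLocalization.integerNormalization A⁰ d with hd₀def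
  have hc' : d₀.map (algebraMap A K) = Polynomial.C (algebraMap A K c) * d := by
    rw [hc, ← algebraMap_smul K (c : A) d, Polynomial.smul_eq_C_mul]
  have hcK : algebraMap A K c ≠ 0 := fun h =>
    mem_nonZeroDivisors_iff_ne_zero.mp hc0 (IsFractionRing.injective A K (by simpa using h))
  have hCc : IsUnit (Polynomial.C (algebraMap A K c)) :=
    Polynomial.isUnit_C.mpr (isUnit_iff_ne_zero.mpr hcK)
  have hcontK : algebraMap A K p.content ≠ 0 := fun h => by
    have : p.content = 0 := IsFractionRing.injective A K (by simpa using h)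
    exact hp (Polynomial.content_eq_zero_iff.mp this)
  have hCcont : IsUnit (Polynomial.C (algebraMap A K p.content)) :=
    Polynomial.isUnit_C.mpr (isUnit_iff_ne_zero.mpr hcontK)
  -- map of primPart d₀ divides map of primPart p
  have h1 : d₀.primPart.map (algebraMap A K) ∣ p.primPart.map (algebraMap A K) := by
    have h2 : d₀.primPart.map (algebraMap A K) ∣ d₀.map (algebraMap A K) :=
      Polynomial.map_dvd _ (d₀.primPart_dvd)
    rw [hc'] at h2
    have h3 : d₀.primPart.map (algebraMap A K) ∣ d := (hCc.dvd_mul_left).mp h2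
    have h4 : d₀.primPart.map (algebraMap A K) ∣ p.map (algebraMap A K) := h3.trans hdvd
    have h5 : p.map (algebraMap A K) =
        Polynomial.C (algebraMap A K p.content) * p.primPart.map (algebraMap A K) := by
      conv_lhs => rw [p.eq_C_content_mul_primPart]
      rw [Polynomial.map_mul, Polynomial.map_C]
    rw [h5] at h4
    exact (hCcont.dvd_mul_left).mp h4
  have h6 : d₀.primPart ∣ p.primPart :=
    (Polynomial.isPrimitive_primPart d₀).dvd_of_fraction_map_dvd_fraction_map
      h1
  exact h6.trans p.primPart_dvd

theorem isCoprime_map_fracMap {f g : A[X]} (h : IsRelPrime f g) (h0 : f ≠ 0) :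
    IsCoprime (f.map (algebraMap A K)) (g.map (algebraMap A K)) := by
  rw [← isRelPrime_iff_isCoprime]
  intro d hdf hdg
  have hfK : f.map (algebraMap A K) ≠ 0 := by
    simpa [Polynomial.map_eq_zero_iff (IsFractionRing.injective A K)] using h0
  have hd0 : d ≠ 0 := fun h' => hfK (by simpa [h'] using hdf)
  have h1 := primPart_integerNormalization_dvd (K := K) hdf
  have h2 := primPart_integerNormalization_dvd (K := K) hdg
  exact Polynomial.isUnit_or_eq_zero_of_isUnit_integerNormalization_primPart hd0 (h h1 h2)


theorem isRelPrime_comp_X_pow {A : Type*} [CommRing A] [IsDomain A]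
    [UniqueFactorizationMonoid A] {f g : A[X]} (h : IsRelPrime f g) (h0 : f ≠ 0)
    {e : ℕ} (he : e ≠ 0) :
    IsRelPrime (f.comp (Polynomial.X ^ e)) (g.comp (Polynomial.X ^ e)) := by
  classical
  letI : NormalizationMonoid A := UniqueFactorizationMonoid.strongNormalizationMonoid.toNormalizationMonoid
  letI := UniqueFactorizationMonoid.toNormalizedGCDMonoid A
  set K := FractionRing A
  have hK : IsCoprime (f.map (algebraMap A K)) (g.map (algebraMap A K)) :=
    isCoprime_map_fracMap h h0
  have haev : ∀ p : K[X], (Polynomial.aeval (Polynomial.X ^ e : K[X])) p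
      = p.comp (Polynomial.X ^ e) := fun p => by
    rw [Polynomial.comp, Polynomial.aeval_def, Polynomial.algebraMap_eq]
  have hcomp : IsCoprime ((f.comp (Polynomial.X ^ e)).map (algebraMap A K))
      ((g.comp (Polynomial.X ^ e)).map (algebraMap A K)) := by
    have := hK.map (Polynomial.aeval (Polynomial.X ^ e : K[X])).toRingHom
    simpa only [AlgHom.toRingHom_eq_coe, RingHom.coe_coe, haev, Polynomial.map_comp,
      Polynomial.map_pow, Polynomial.map_X] using this
  intro d hdF hdG
  have hmapd : IsUnit (d.map (algebraMap A K)) :=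
    hcomp.isUnit_of_dvd' (Polynomial.map_dvd _ hdF) (Polynomial.map_dvd _ hdG)
  have hdeg : d.natDegree = 0 := by
    rw [← Polynomial.natDegree_map_eq_of_injective (IsFractionRing.injective A K) d]
    exact Polynomial.natDegree_eq_zero_of_isUnit hmapd
  have hdC : d = Polynomial.C (d.coeff 0) := Polynomial.eq_C_of_natDegree_eq_zero hdeg
  set a := d.coeff 0
  have hf' : Polynomial.C a ∣ f := by
    rw [Polynomial.C_dvd_iff_dvd_coeff]
    intro i
    have := (Polynomial.C_dvd_iff_dvd_coeff a _).mp (hdC ▸ hdF) (e * i)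
    rwa [coeff_comp_X_pow f he i] at this
  have hg' : Polynomial.C a ∣ g := by
    rw [Polynomial.C_dvd_iff_dvd_coeff]
    intro i
    have := (Polynomial.C_dvd_iff_dvd_coeff a _).mp (hdC ▸ hdG) (e * i)
    rwa [coeff_comp_X_pow g he i] at this
  rw [hdC]
  exact h hf' hg'

noncomputable def stepHom {n : ℕ} (i₀ : Fin n) (m : ℕ) :
    MvPolynomial (Fin n) ℤ →ₐ[ℤ] MvPolynomial (Fin n) ℤ :=
  MvPolynomial.aeval fun j => if j = i₀ then X j ^ m else X j

noncomputable def theta {n : ℕ} (i₀ : Fin n) :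
    MvPolynomial (Fin n) ℤ ≃ₐ[ℤ] Polynomial (MvPolynomial {j : Fin n // j ≠ i₀} ℤ) :=
  (renameEquiv ℤ (Equiv.optionSubtypeNe i₀).symm).trans (optionEquivLeft ℤ _)

theorem theta_X_self {n : ℕ} (i₀ : Fin n) : theta i₀ (X i₀) = Polynomial.X := by
  simp [theta, Equiv.optionSubtypeNe_symm_self, optionEquivLeft_X_none]

theorem theta_X_ne {n : ℕ} {i₀ j : Fin n} (h : j ≠ i₀) :
    theta i₀ (X j) = Polynomial.C (X ⟨j, h⟩) := by
  simp [theta, Equiv.optionSubtypeNe_symm_of_ne h, optionEquivLeft_X_some]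

theorem theta_stepHom {n : ℕ} (i₀ : Fin n) (m : ℕ) (p : MvPolynomial (Fin n) ℤ) :
    theta i₀ (stepHom i₀ m p) = (theta i₀ p).comp (Polynomial.X ^ m) := by
  have hc : ∀ q : Polynomial (MvPolynomial {j : Fin n // j ≠ i₀} ℤ),
      q.comp (Polynomial.X ^ m) =
        (AlgHom.restrictScalars ℤ (Polynomial.aeval
          (Polynomial.X ^ m : Polynomial (MvPolynomial {j : Fin n // j ≠ i₀} ℤ)))) q := by
    intro q
    rw [AlgHom.restrictScalars_apply, Polynomial.comp, Polynomial.aeval_def,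
      Polynomial.algebraMap_eq]
  rw [hc]
  have heq : ((theta i₀).toAlgHom.comp (stepHom i₀ m)) =
      (AlgHom.restrictScalars ℤ (Polynomial.aeval
        (Polynomial.X ^ m : Polynomial (MvPolynomial {j : Fin n // j ≠ i₀} ℤ)))).comp
        (theta i₀).toAlgHom := by
    apply MvPolynomial.algHom_ext
    intro j
    by_cases hj : j = i₀
    · subst hj
      simp [stepHom, theta_X_self]
    · simp [stepHom, hj, theta_X_ne hj, Polynomial.aeval_C, Polynomial.algebraMap_eq]
  exact DFunLike.congr_fun heq p

theorem stepHom_isRelPrime {n : ℕ} (i₀ : Fin n) {m : ℕ} (hm : m ≠ 0)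
    {f g : MvPolynomial (Fin n) ℤ} (h : IsRelPrime f g) (h0 : f ≠ 0) :
    IsRelPrime (stepHom i₀ m f) (stepHom i₀ m g) ∧ stepHom i₀ m f ≠ 0 := by
  have hTf : theta i₀ f ≠ 0 := fun h' => h0 (by
    apply (theta i₀).injective
    simpa using h')
  have hrel : IsRelPrime (theta i₀ f) (theta i₀ g) :=
    (isRelPrime_equiv_iff (theta i₀)).mpr h
  have h3 := isRelPrime_comp_X_pow hrel hTf hm
  rw [← theta_stepHom, ← theta_stepHom] at h3
  constructor
  · exact (isRelPrime_equiv_iff (theta i₀)).mp h3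
  · intro h'
    apply hTf
    have hts := theta_stepHom i₀ m f
    rw [h', map_zero] at hts
    exact comp_X_pow_eq_zero hm hts.symm

theorem foldStep {n : ℕ} (e : Fin n → ℕ) (he : ∀ i, e i ≠ 0) :
    ∀ L : List (Fin n), L.Nodup → ∀ {f g : MvPolynomial (Fin n) ℤ}, IsRelPrime f g → f ≠ 0 →
      IsRelPrime
        (MvPolynomial.aeval
          (fun j => if j ∈ L then X j ^ e j else (X j : MvPolynomial (Fin n) ℤ)) f)
        (MvPolynomial.aeval
          (fun j => if j ∈ L then X j ^ e j else (X j : MvPolynomial (Fin n) ℤ)) g) ∧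
      MvPolynomial.aeval
        (fun j => if j ∈ L then X j ^ e j else (X j : MvPolynomial (Fin n) ℤ)) f ≠ 0 := by
  intro L
  induction L with
  | nil =>
    intro _ f g h h0
    have hid : ∀ p : MvPolynomial (Fin n) ℤ,
        MvPolynomial.aeval
          (fun j => if j ∈ ([] : List (Fin n)) then X j ^ e j
            else (X j : MvPolynomial (Fin n) ℤ)) p = p := by
      intro p
      have hfn : (fun j => if j ∈ ([] : List (Fin n)) then X j ^ e j
          else (X j : MvPolynomial (Fin n) ℤ)) = fun j => (X j : MvPolynomial (Fin n) ℤ) := by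
        funext j; simp
      rw [hfn]
      exact MvPolynomial.aeval_X_left_apply p
    rw [hid, hid]
    exact ⟨h, h0⟩
  | cons i L ih =>
    intro hnd f g h h0
    obtain ⟨hiL, hndL⟩ := List.nodup_cons.mp hnd
    have hcomp : ∀ p : MvPolynomial (Fin n) ℤ,
        MvPolynomial.aeval
          (fun j => if j ∈ (i :: L) then X j ^ e j else (X j : MvPolynomial (Fin n) ℤ)) p =
          stepHom i (e i) (MvPolynomial.aeval
            (fun j => if j ∈ L then X j ^ e j else (X j : MvPolynomial (Fin n) ℤ)) p) := by
      intro p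
      have heq : (MvPolynomial.aeval
          (fun j => if j ∈ (i :: L) then X j ^ e j else (X j : MvPolynomial (Fin n) ℤ))) =
          (stepHom i (e i)).comp (MvPolynomial.aeval
            (fun j => if j ∈ L then X j ^ e j else (X j : MvPolynomial (Fin n) ℤ))) := by
        apply MvPolynomial.algHom_ext
        intro j
        by_cases hj : j = i
        · subst hj
          simp [stepHom, hiL]
        · by_cases hjL : j ∈ L
          · simp [stepHom, hj, hjL]
          · simp [stepHom, hj, hjL]
      rw [heq]; rfl
    obtain ⟨h1, h2⟩ := ih hndL h h0
    obtain ⟨h3, h4⟩ := stepHom_isRelPrime i (he i) h1 h2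
    rw [hcomp, hcomp]
    exact ⟨h3, h4⟩

theorem pow_isRelPrime {n : ℕ} (e : Fin n → ℕ) (he : ∀ i, e i ≠ 0)
    {f g : MvPolynomial (Fin n) ℤ} (h : IsRelPrime f g) (h0 : f ≠ 0) :
    IsRelPrime
      (MvPolynomial.aeval (fun j => (X j : MvPolynomial (Fin n) ℤ) ^ e j) f)
      (MvPolynomial.aeval (fun j => (X j : MvPolynomial (Fin n) ℤ) ^ e j) g) ∧
    MvPolynomial.aeval (fun j => (X j : MvPolynomial (Fin n) ℤ) ^ e j) f ≠ 0 := by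
  have hres := foldStep e he (List.finRange n) (List.nodup_finRange n) h h0
  have hfun : (fun j => if j ∈ List.finRange n then X j ^ e j
      else (X j : MvPolynomial (Fin n) ℤ)) =
      fun j => (X j : MvPolynomial (Fin n) ℤ) ^ e j := by
    funext j; simp [List.mem_finRange]
  rwa [hfun] at hres

theorem rename_succ_isRelPrime {n : ℕ} {f g : MvPolynomial (Fin n) ℤ}
    (h : IsRelPrime f g) (h0 : f ≠ 0) :
    IsRelPrime (rename Fin.succ f) (rename Fin.succ g) := by
  have key : ∀ p : MvPolynomial (Fin n) ℤ,
      MvPolynomial.finSuccEquiv ℤ n (rename Fin.succ p) = Polynomial.C p := by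
    intro p
    have heq : (MvPolynomial.finSuccEquiv ℤ n).toAlgHom.comp
        (rename (R := ℤ) (Fin.succ : Fin n → Fin (n + 1))) =
        IsScalarTower.toAlgHom ℤ (MvPolynomial (Fin n) ℤ)
          (Polynomial (MvPolynomial (Fin n) ℤ)) := by
      apply MvPolynomial.algHom_ext
      intro i
      simp [MvPolynomial.finSuccEquiv_X_succ, Polynomial.algebraMap_eq]
    exact DFunLike.congr_fun heq p
  have h1 : IsRelPrime (Polynomial.C f) (Polynomial.C g) := isRelPrime_C_of_isRelPrime h h0
  rw [← key f, ← key g] at h1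
  exact (isRelPrime_equiv_iff (MvPolynomial.finSuccEquiv ℤ n)).mp h1
noncomputable def shiftHom (n : ℕ) :
    MvPolynomial (Fin (n + 1)) ℤ →ₐ[ℤ] MvPolynomial (Fin (n + 1)) ℤ :=
  MvPolynomial.aeval fun j => if j = 0 then X 0 else X 0 + X j

noncomputable def unshiftHom (n : ℕ) :
    MvPolynomial (Fin (n + 1)) ℤ →ₐ[ℤ] MvPolynomial (Fin (n + 1)) ℤ :=
  MvPolynomial.aeval fun j => if j = 0 then X 0 else X j - X 0

theorem shift_unshift (n : ℕ) : (shiftHom n).comp (unshiftHom n) = AlgHom.id ℤ _ := by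
  apply MvPolynomial.algHom_ext
  intro j
  by_cases hj : j = 0 <;> simp [shiftHom, unshiftHom, hj]

theorem unshift_shift (n : ℕ) : (unshiftHom n).comp (shiftHom n) = AlgHom.id ℤ _ := by
  apply MvPolynomial.algHom_ext
  intro j
  by_cases hj : j = 0 <;> simp [shiftHom, unshiftHom, hj]

noncomputable def shiftEquiv (n : ℕ) :
    MvPolynomial (Fin (n + 1)) ℤ ≃ₐ[ℤ] MvPolynomial (Fin (n + 1)) ℤ :=
  AlgEquiv.ofAlgHom (shiftHom n) (unshiftHom n) (shift_unshift n) (unshift_shift n)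

theorem shiftEquiv_apply (n : ℕ) (p : MvPolynomial (Fin (n + 1)) ℤ) :
    shiftEquiv n p = shiftHom n p := rfl

theorem main_aux (n D : ℕ) (f g : MvPolynomial (Fin n) ℤ)
    (hcop : IsRelPrime f g) (h0 : f ≠ 0) :
    IsRelPrime
      ((MvPolynomial.aeval fun i : Fin n =>
        ((X 0 + X i.succ : MvPolynomial (Fin (n + 1)) ℤ) ^ (D + 1) ^ (i : ℕ))) f)
      ((MvPolynomial.aeval fun i : Fin n =>
        ((X 0 + X i.succ : MvPolynomial (Fin (n + 1)) ℤ) ^ (D + 1) ^ (i : ℕ))) g) := by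
  set e : Fin n → ℕ := fun i => (D + 1) ^ (i : ℕ) with he_def
  have he : ∀ i, e i ≠ 0 := fun i => pow_ne_zero _ (Nat.succ_ne_zero D)
  have key : ∀ p : MvPolynomial (Fin n) ℤ,
      (MvPolynomial.aeval fun i : Fin n =>
        ((X 0 + X i.succ : MvPolynomial (Fin (n + 1)) ℤ) ^ (D + 1) ^ (i : ℕ))) p =
      shiftEquiv n (rename Fin.succ
        (MvPolynomial.aeval (fun j => (X j : MvPolynomial (Fin n) ℤ) ^ e j) p)) := by
    intro p
    have heq : (MvPolynomial.aeval fun i : Fin n =>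
        ((X 0 + X i.succ : MvPolynomial (Fin (n + 1)) ℤ) ^ (D + 1) ^ (i : ℕ))) =
        ((shiftHom n).comp ((rename (R := ℤ) (Fin.succ : Fin n → Fin (n + 1))).comp
          (MvPolynomial.aeval (fun j => (X j : MvPolynomial (Fin n) ℤ) ^ e j)))) := by
      apply MvPolynomial.algHom_ext
      intro i
      simp [shiftHom, Fin.succ_ne_zero i, he_def]
    rw [heq, shiftEquiv_apply]
    rfl
  obtain ⟨h1, h2⟩ := pow_isRelPrime e he hcop h0
  have h3 := rename_succ_isRelPrime h1 h2
  have h4 := (isRelPrime_equiv_iff (shiftEquiv n)).mpr h3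
  rw [key f, key g]
  exact h4
end Stmt15Aux

/-- In `MvPolynomial (Fin (n+1)) ℤ`, the variable `X 0` plays the role of the new
variable `x`, and `X i.succ` plays the role of `cᵢ`. The substitution sends
`xᵢ ↦ (x + cᵢ) ^ (D+1)^(i-1)`. -/
theorem stmt15 (n D : ℕ) (f g : MvPolynomial (Fin n) ℤ)
    (hcop : IsRelPrime f g)
    (hdf : f.totalDegree ≤ D) (hdg : g.totalDegree ≤ D) :
    IsRelPrime
      ((aeval fun i : Fin n =>
        ((X 0 + X i.succ : MvPolynomial (Fin (n + 1)) ℤ) ^ (D + 1) ^ (i : ℕ))) f)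
      ((aeval fun i : Fin n =>
        ((X 0 + X i.succ : MvPolynomial (Fin (n + 1)) ℤ) ^ (D + 1) ^ (i : ℕ))) g) := by
  have hne : f ≠ 0 ∨ g ≠ 0 := by
    by_contra hc
    push_neg at hc
    obtain ⟨hf, hg⟩ := hc
    have h2 : IsUnit (2 : MvPolynomial (Fin n) ℤ) :=
      hcop (by rw [hf]; exact dvd_zero _) (by rw [hg]; exact dvd_zero _)
    have h3 : IsUnit (constantCoeff (2 : MvPolynomial (Fin n) ℤ)) := h2.map constantCoeff
    rw [map_ofNat] at h3
    rcases Int.isUnit_iff.mp h3 with h | h <;> omega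
  rcases hne with h0 | h0
  · exact main_aux n D f g hcop h0
  · exact (main_aux n D g f hcop.symm h0).symm
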